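/- In the setting of a C-convex vector optimization problem with nontrivial P = cl(Γ[X] + C), dual image D := −epi f* = {(w,s) ∈ ℝ^{q−1} × ℝ : c*(w) ∈ C⁺, s ≤ −f*(−w)}, and ψ(y,v) := (v₁,…,v_{q−1},1)·T⁻¹·y − v_q, H(v) := {y ∈ ℝ^q : ψ(y,v) = 0}, H*(y) := {v ∈ ℝ^q : ψ(y,v) = 0}: the mapping Ψ̂(F*) := ⋂_{v ∈ F*} H(v) ∩ P is an inclusion-reversing one-to-one map between the set of all K-maximal exposed faces of D and the set of all relatively C-minimal exposed faces of P, with inverse Ψ̂⁻¹(F) = ⋂_{y ∈ F} H*(y) ∩ D. -/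

import Mathlib

open Matrix Set
open scoped Pointwise

noncomputable section

/-- Γ is C-convex. -/
def CConvex (q m : ℕ) (C : Set (Fin (q + 1) → ℝ))
    (Γ : (Fin m → ℝ) → Fin (q + 1) → ℝ) : Prop :=
  ∀ x₁ x₂ : Fin m → ℝ, ∀ t ∈ Set.Icc (0 : ℝ) 1,
    (1 - t) • Γ x₁ + t • Γ x₂ - Γ ((1 - t) • x₁ + t • x₂) ∈ C

/-- The upper closed extended image P = cl(Γ[X] + C). -/
def Pimg (q m : ℕ) (Γ : (Fin m → ℝ) → Fin (q + 1) → ℝ) (X : Set (Fin m → ℝ))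
    (C : Set (Fin (q + 1) → ℝ)) : Set (Fin (q + 1) → ℝ) :=
  closure (Γ '' X + C)

/-- The linear map E, sending z ∈ ℝ^{q-1} to Ez = Σ z_i e^i. -/
def Emap (q : ℕ) (e : Fin q → Fin (q + 1) → ℝ) (z : Fin q → ℝ) : Fin (q + 1) → ℝ :=
  ∑ i, z i • e i

/-- The scalarization functional φ(y) = inf{r ∈ ℝ : r·k − y ∈ C} (inf ∅ = +∞). -/
def phiF (q : ℕ) (C : Set (Fin (q + 1) → ℝ)) (k : Fin (q + 1) → ℝ)
    (y : Fin (q + 1) → ℝ) : EReal :=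
  sInf ((fun r : ℝ => (r : EReal)) '' {r : ℝ | r • k - y ∈ C})

/-- f(z) = inf_{x ∈ X} φ(Γ(x) − Ez). -/
def fF (q m : ℕ) (C : Set (Fin (q + 1) → ℝ)) (k : Fin (q + 1) → ℝ)
    (e : Fin q → Fin (q + 1) → ℝ) (Γ : (Fin m → ℝ) → Fin (q + 1) → ℝ)
    (X : Set (Fin m → ℝ)) (z : Fin q → ℝ) : EReal :=
  ⨅ x ∈ X, phiF q C k (Γ x - Emap q e z)

/-- The matrix T = (e¹,…,e^{q−1},k) (columns e¹,…,e^{q−1},k). -/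
def Tmat (q : ℕ) (e : Fin q → Fin (q + 1) → ℝ) (k : Fin (q + 1) → ℝ) :
    Matrix (Fin (q + 1)) (Fin (q + 1)) ℝ :=
  Matrix.of fun i j => (Fin.snoc e k : Fin (q + 1) → Fin (q + 1) → ℝ) j i

/-- The Legendre–Fenchel conjugate f*(w) = sup_z (⟨z,w⟩ − f(z)). -/
def conjq (q : ℕ) (f : (Fin q → ℝ) → EReal) (w : Fin q → ℝ) : EReal :=
  ⨆ z : Fin q → ℝ, (((z ⬝ᵥ w : ℝ) : EReal) - f z)

/-- The epigraph of an extended-real-valued function on ℝ^{q-1}. -/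
def epi (q : ℕ) (f : (Fin q → ℝ) → EReal) : Set ((Fin q → ℝ) × ℝ) :=
  {p | f p.1 ≤ (p.2 : EReal)}

/-- The dual image D = −epi f*. -/
def Dimg (q m : ℕ) (C : Set (Fin (q + 1) → ℝ)) (k : Fin (q + 1) → ℝ)
    (e : Fin q → Fin (q + 1) → ℝ) (Γ : (Fin m → ℝ) → Fin (q + 1) → ℝ)
    (X : Set (Fin m → ℝ)) : Set ((Fin q → ℝ) × ℝ) :=
  -(epi q (conjq q (fF q m C k e Γ X)))

/-- The coupling function ψ(y,v) = (v₁,…,v_{q−1},1)·T⁻¹·y − v_q, written with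
M = T⁻¹. -/
def psiB (q : ℕ) (M : Matrix (Fin (q + 1)) (Fin (q + 1)) ℝ)
    (y : Fin (q + 1) → ℝ) (v : (Fin q → ℝ) × ℝ) : ℝ :=
  (Fin.snoc v.1 1 : Fin (q + 1) → ℝ) ⬝ᵥ (M *ᵥ y) - v.2

/-- Ψ̂(F*) = ⋂_{v ∈ F*} H(v) ∩ P, with H(v) = {y : ψ(y,v) = 0}. -/
def PsiHat (q : ℕ) (M : Matrix (Fin (q + 1)) (Fin (q + 1)) ℝ)
    (P : Set (Fin (q + 1) → ℝ)) (Fs : Set ((Fin q → ℝ) × ℝ)) :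
    Set (Fin (q + 1) → ℝ) :=
  ⋂ v ∈ Fs, ({y | psiB q M y v = 0} ∩ P)

/-- Ψ̂⁻¹(F) = ⋂_{y ∈ F} H*(y) ∩ D, with H*(y) = {v : ψ(y,v) = 0}. -/
def PsiHatInv (q : ℕ) (M : Matrix (Fin (q + 1)) (Fin (q + 1)) ℝ)
    (D : Set ((Fin q → ℝ) × ℝ)) (F : Set (Fin (q + 1) → ℝ)) :
    Set ((Fin q → ℝ) × ℝ) :=
  ⋂ y ∈ F, ({v | psiB q M y v = 0} ∩ D)

/-- The ordering cone K = {0}^{q−1} × [0,∞) in ℝ^{q−1} × ℝ. -/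
def KconeQ (q : ℕ) : Set ((Fin q → ℝ) × ℝ) := {p | p.1 = 0 ∧ 0 ≤ p.2}

/-- v is K-maximal in A : ({v} + (K \ (−K))) ∩ A = ∅. -/
def KMaxPt (q : ℕ) (A : Set ((Fin q → ℝ) × ℝ)) (v : (Fin q → ℝ) × ℝ) : Prop :=
  ({v} + (KconeQ q \ (-KconeQ q))) ∩ A = ∅

/-- A supporting hyperplane to a set in ℝ^{q−1} × ℝ. -/
def IsSuppHypD (q : ℕ) (A : Set ((Fin q → ℝ) × ℝ)) (u : Fin q → ℝ) (s α : ℝ) : Prop :=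
  (u, s) ≠ 0 ∧ ({p : (Fin q → ℝ) × ℝ | p.1 ⬝ᵥ u + p.2 * s = α} ∩ A).Nonempty ∧
    ∀ p ∈ A, p.1 ⬝ᵥ u + p.2 * s ≤ α

/-- F is a K-maximal exposed face of A ⊆ ℝ^{q−1} × ℝ. -/
def IsKMaxExpFace (q : ℕ) (A F : Set ((Fin q → ℝ) × ℝ)) : Prop :=
  (∃ (u : Fin q → ℝ) (s α : ℝ), IsSuppHypD q A u s α ∧
      F = {p : (Fin q → ℝ) × ℝ | p.1 ⬝ᵥ u + p.2 * s = α} ∩ A) ∧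
    ∀ v ∈ F, KMaxPt q A v

/-- A supporting hyperplane to a set in ℝ^q. -/
def IsSuppHypP (q : ℕ) (A : Set (Fin (q + 1) → ℝ)) (v : Fin (q + 1) → ℝ) (α : ℝ) : Prop :=
  v ≠ 0 ∧ ({y | v ⬝ᵥ y = α} ∩ A).Nonempty ∧ ∀ y ∈ A, v ⬝ᵥ y ≤ α

/-- F is a relatively C-minimal exposed face of A ⊆ ℝ^q. -/
def IsRelCMinExpFace (q : ℕ) (C : Set (Fin (q + 1) → ℝ))
    (A F : Set (Fin (q + 1) → ℝ)) : Prop :=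
  (∃ (v : Fin (q + 1) → ℝ) (α : ℝ), IsSuppHypP q A v α ∧
      F = {y | v ⬝ᵥ y = α} ∩ A) ∧
    ∀ y ∈ F, A ∩ ({y} - intrinsicInterior ℝ C) = ∅
section Aux

variable {q : ℕ}

/-- From an intrinsic interior point one can move slightly past it away from any
point of the set, staying in the set. -/
lemma lin_access {E : Type*} [NormedAddCommGroup E] [NormedSpace ℝ E] (S : Set E)
    {x x₀ : E} (hx : x ∈ S) (hx₀ : x₀ ∈ intrinsicInterior ℝ S) :
    ∃ t : ℝ, 0 < t ∧ (1 + t) • x₀ + (-t) • x ∈ S := by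
  obtain ⟨y₀, hy₀, rfl⟩ := hx₀
  have hxA : x ∈ affineSpan ℝ S := subset_affineSpan ℝ S hx
  have hmem : ∀ t : ℝ, (1 + t) • (y₀ : E) + (-t) • x ∈ affineSpan ℝ S := by
    intro t
    have := AffineSubspace.smul_vsub_vadd_mem (affineSpan ℝ S) t y₀.2 hxA y₀.2
    convert this using 1
    simp [vsub_eq_sub, vadd_eq_add]
    module
  set φ : ℝ → affineSpan ℝ S := fun t => ⟨(1 + t) • (y₀ : E) + (-t) • x, hmem t⟩ with hφ
  have hφc : Continuous φ := by
    apply Continuous.subtype_mk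
    exact (((continuous_const.add continuous_id).smul continuous_const).add
      ((continuous_id.neg).smul continuous_const))
  have hφ0 : φ 0 = y₀ := by
    apply Subtype.ext; simp [hφ]
  have : φ ⁻¹' (interior ((↑) ⁻¹' S : Set (affineSpan ℝ S))) ∈ nhds (0 : ℝ) := by
    apply hφc.continuousAt.preimage_mem_nhds
    rw [hφ0]
    exact isOpen_interior.mem_nhds hy₀
  obtain ⟨ε, hε, hball⟩ := Metric.mem_nhds_iff.1 this
  refine ⟨ε / 2, by linarith, ?_⟩
  have h2 : φ (ε / 2) ∈ interior ((↑) ⁻¹' S : Set (affineSpan ℝ S)) := by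
    apply hball
    simp only [Metric.mem_ball, Real.dist_eq, sub_zero]
    rw [abs_of_pos (by linarith)]; linarith
  have h3 := interior_subset h2
  exact h3

lemma dotProduct_snoc (a b : Fin q → ℝ) (x y : ℝ) :
    (Fin.snoc a x : Fin (q + 1) → ℝ) ⬝ᵥ (Fin.snoc b y : Fin (q + 1) → ℝ) = a ⬝ᵥ b + x * y := by
  simp [dotProduct, Fin.sum_univ_castSucc]

lemma Tmat_mulVec_snoc (e : Fin q → Fin (q + 1) → ℝ) (k : Fin (q + 1) → ℝ)
    (z : Fin q → ℝ) (r : ℝ) :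
    Tmat q e k *ᵥ (Fin.snoc z r : Fin (q + 1) → ℝ) = Emap q e z + r • k := by
  funext i
  simp only [Tmat, Emap, Matrix.mulVec, dotProduct, Matrix.of_apply]
  rw [Fin.sum_univ_castSucc]
  simp [Finset.sum_apply, mul_comm]

end Aux
section Aux2

variable {q : ℕ}

lemma Tmat_det_isUnit (e : Fin q → Fin (q + 1) → ℝ) (k : Fin (q + 1) → ℝ)
    (hli : LinearIndependent ℝ (Fin.snoc e k : Fin (q + 1) → Fin (q + 1) → ℝ)) :
    IsUnit (Tmat q e k).det := by
  rw [← Matrix.isUnit_iff_isUnit_det, ← Matrix.isUnit_transpose]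
  rw [← Matrix.linearIndependent_rows_iff_isUnit]
  exact hli

lemma Tinv_mulVec_Tmul (e : Fin q → Fin (q + 1) → ℝ) (k : Fin (q + 1) → ℝ)
    (hli : LinearIndependent ℝ (Fin.snoc e k : Fin (q + 1) → Fin (q + 1) → ℝ))
    (x : Fin (q + 1) → ℝ) :
    (Tmat q e k)⁻¹ *ᵥ (Tmat q e k *ᵥ x) = x := by
  rw [Matrix.mulVec_mulVec, Matrix.nonsing_inv_mul _ (Tmat_det_isUnit e k hli),
    Matrix.one_mulVec]

lemma Tmul_mulVec_Tinv (e : Fin q → Fin (q + 1) → ℝ) (k : Fin (q + 1) → ℝ)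
    (hli : LinearIndependent ℝ (Fin.snoc e k : Fin (q + 1) → Fin (q + 1) → ℝ))
    (y : Fin (q + 1) → ℝ) :
    Tmat q e k *ᵥ ((Tmat q e k)⁻¹ *ᵥ y) = y := by
  rw [Matrix.mulVec_mulVec, Matrix.mul_nonsing_inv _ (Tmat_det_isUnit e k hli),
    Matrix.one_mulVec]

lemma Tmat_decomp (e : Fin q → Fin (q + 1) → ℝ) (k : Fin (q + 1) → ℝ)
    (hli : LinearIndependent ℝ (Fin.snoc e k : Fin (q + 1) → Fin (q + 1) → ℝ))
    (y : Fin (q + 1) → ℝ) :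
    Tmat q e k *ᵥ (Fin.snoc (Fin.init ((Tmat q e k)⁻¹ *ᵥ y))
      (((Tmat q e k)⁻¹ *ᵥ y) (Fin.last q)) : Fin (q + 1) → ℝ) = y := by
  rw [Fin.snoc_init_self]
  exact Tmul_mulVec_Tinv e k hli y

lemma psiB_T_snoc (e : Fin q → Fin (q + 1) → ℝ) (k : Fin (q + 1) → ℝ)
    (hli : LinearIndependent ℝ (Fin.snoc e k : Fin (q + 1) → Fin (q + 1) → ℝ))
    (z : Fin q → ℝ) (r : ℝ) (w : Fin q → ℝ) (s : ℝ) :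
    psiB q (Tmat q e k)⁻¹ (Tmat q e k *ᵥ (Fin.snoc z r : Fin (q + 1) → ℝ)) (w, s)
      = w ⬝ᵥ z + r - s := by
  unfold psiB
  rw [Tinv_mulVec_Tmul e k hli, dotProduct_snoc]
  ring

lemma psiB_add_smul (M : Matrix (Fin (q + 1)) (Fin (q + 1)) ℝ)
    (y z : Fin (q + 1) → ℝ) (t : ℝ) (v : (Fin q → ℝ) × ℝ) :
    psiB q M (y + t • z) v
      = psiB q M y v + t * ((Fin.snoc v.1 1 : Fin (q + 1) → ℝ) ⬝ᵥ (M *ᵥ z)) := by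
  unfold psiB
  rw [Matrix.mulVec_add, Matrix.mulVec_smul, dotProduct_add, dotProduct_smul]
  simp only [smul_eq_mul]
  try ring

lemma psiB_lin_y (M : Matrix (Fin (q + 1)) (Fin (q + 1)) ℝ)
    (y₁ y₂ : Fin (q + 1) → ℝ) (a b : ℝ) (hab : a + b = 1) (v : (Fin q → ℝ) × ℝ) :
    psiB q M (a • y₁ + b • y₂) v = a * psiB q M y₁ v + b * psiB q M y₂ v := by
  unfold psiB
  rw [Matrix.mulVec_add, Matrix.mulVec_smul, Matrix.mulVec_smul, dotProduct_add,
    dotProduct_smul, dotProduct_smul]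
  simp only [smul_eq_mul]
  linear_combination v.2 * hab

lemma snoc_combo (w₁ w₂ : Fin q → ℝ) (a b : ℝ) (hab : a + b = 1) :
    (Fin.snoc (a • w₁ + b • w₂) 1 : Fin (q + 1) → ℝ)
      = a • (Fin.snoc w₁ 1 : Fin (q + 1) → ℝ) + b • (Fin.snoc w₂ 1 : Fin (q + 1) → ℝ) := by
  funext i
  refine Fin.lastCases ?_ ?_ i
  · simp [hab]
  · intro j; simp

lemma psiB_lin_v (M : Matrix (Fin (q + 1)) (Fin (q + 1)) ℝ)
    (y : Fin (q + 1) → ℝ) (a b : ℝ) (hab : a + b = 1) (v₁ v₂ : (Fin q → ℝ) × ℝ) :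
    psiB q M y (a • v₁ + b • v₂) = a * psiB q M y v₁ + b * psiB q M y v₂ := by
  unfold psiB
  have h1 : (a • v₁ + b • v₂).1 = a • v₁.1 + b • v₂.1 := rfl
  have h2 : (a • v₁ + b • v₂).2 = a * v₁.2 + b * v₂.2 := rfl
  rw [h1, h2, snoc_combo _ _ _ _ hab, add_dotProduct, smul_dotProduct, smul_dotProduct]
  simp only [smul_eq_mul]
  ring

lemma ereal_coe_sub_le (a b : ℝ) (c : EReal) :
    (a : EReal) - c ≤ (b : EReal) ↔ ((a - b : ℝ) : EReal) ≤ c := by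
  induction c using EReal.rec with
  | bot =>
    simp only [sub_eq_add_neg, EReal.neg_bot, EReal.add_top_of_ne_bot (EReal.coe_ne_bot a)]
    simp
  | coe c =>
    rw [← EReal.coe_sub, EReal.coe_le_coe_iff, EReal.coe_le_coe_iff]
    constructor <;> intro <;> linarith
  | top =>
    simp only [sub_eq_add_neg, EReal.neg_top, EReal.add_bot]
    simp

end Aux2
section Aux3

variable {q m : ℕ}

lemma psiB_eq_dot (M : Matrix (Fin (q + 1)) (Fin (q + 1)) ℝ) (v : (Fin q → ℝ) × ℝ)
    (y : Fin (q + 1) → ℝ) :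
    psiB q M y v = (Matrix.vecMul (Fin.snoc v.1 1 : Fin (q + 1) → ℝ) M) ⬝ᵥ y - v.2 := by
  unfold psiB
  rw [dotProduct_mulVec]

lemma psiB_continuous (M : Matrix (Fin (q + 1)) (Fin (q + 1)) ℝ) (v : (Fin q → ℝ) × ℝ) :
    Continuous fun y => psiB q M y v := by
  have : (fun y => psiB q M y v)
      = fun y => (∑ j, Matrix.vecMul (Fin.snoc v.1 1 : Fin (q + 1) → ℝ) M j * y j) - v.2 := by
    funext y; rw [psiB_eq_dot]; rfl
  rw [this]
  exact (continuous_finset_sum _ fun j _ =>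
    continuous_const.mul (continuous_apply j)).sub continuous_const

lemma mem_Dimg_iff (C : Set (Fin (q + 1) → ℝ)) (k : Fin (q + 1) → ℝ)
    (e : Fin q → Fin (q + 1) → ℝ) (Γ : (Fin m → ℝ) → Fin (q + 1) → ℝ)
    (X : Set (Fin m → ℝ))
    (hli : LinearIndependent ℝ (Fin.snoc e k : Fin (q + 1) → Fin (q + 1) → ℝ))
    (w : Fin q → ℝ) (s : ℝ) :
    (w, s) ∈ Dimg q m C k e Γ X ↔
      ∀ y ∈ Γ '' X + C, 0 ≤ psiB q (Tmat q e k)⁻¹ y (w, s) := by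
  have step1 : (w, s) ∈ Dimg q m C k e Γ X ↔
      ∀ z : Fin q → ℝ, ∀ x ∈ X, ∀ r : ℝ,
        r • k - (Γ x - Emap q e z) ∈ C → s - z ⬝ᵥ w ≤ r := by
    show (-(w, s) ∈ epi q (conjq q (fF q m C k e Γ X))) ↔ _
    show (conjq q (fF q m C k e Γ X) (-w) ≤ ((- s : ℝ) : EReal)) ↔ _
    unfold conjq
    rw [iSup_le_iff]
    apply forall_congr'
    intro z
    rw [ereal_coe_sub_le]
    have hz : (z ⬝ᵥ (-w) - (-s) : ℝ) = s - z ⬝ᵥ w := by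
      rw [dotProduct_neg]; ring
    rw [hz]
    unfold fF
    rw [le_iInf₂_iff]
    apply forall_congr'
    intro x
    apply forall_congr'
    intro _
    unfold phiF
    rw [le_sInf_iff]
    constructor
    · intro h r hr
      have := h ((r : ℝ) : EReal) ⟨r, hr, rfl⟩
      exact_mod_cast this
    · rintro h b ⟨r, hr, rfl⟩
      exact EReal.coe_le_coe_iff.mpr (h r hr)
  rw [step1]
  constructor
  · intro h y hy
    rw [Set.mem_add] at hy
    obtain ⟨g, ⟨x, hx, rfl⟩, c, hc, rfl⟩ := hy
    set z := Fin.init ((Tmat q e k)⁻¹ *ᵥ (Γ x + c)) with hz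
    set r := ((Tmat q e k)⁻¹ *ᵥ (Γ x + c)) (Fin.last q) with hr
    have hy' : Tmat q e k *ᵥ (Fin.snoc z r : Fin (q + 1) → ℝ) = Γ x + c :=
      Tmat_decomp e k hli _
    have hy'' : Emap q e z + r • k = Γ x + c := by
      rw [← Tmat_mulVec_snoc]; exact hy'
    have hC : r • k - (Γ x - Emap q e z) ∈ C := by
      have h4 : r • k - (Γ x - Emap q e z) = (Emap q e z + r • k) - Γ x := by abel
      rw [h4, hy'']
      have h5 : Γ x + c - Γ x = c := by abel
      rw [h5]; exact hc
    have hle := h z x hx r hC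
    have hps : psiB q (Tmat q e k)⁻¹ (Γ x + c) (w, s) = w ⬝ᵥ z + r - s := by
      rw [← hy', psiB_T_snoc e k hli]
    rw [hps]
    have hcomm : w ⬝ᵥ z = z ⬝ᵥ w := dotProduct_comm _ _
    linarith
  · intro h z x hx r hC
    have hmem : Emap q e z + r • k ∈ Γ '' X + C := by
      rw [Set.mem_add]
      refine ⟨Γ x, ⟨x, hx, rfl⟩, r • k - (Γ x - Emap q e z), hC, by abel⟩
    have h0 := h _ hmem
    rw [← Tmat_mulVec_snoc, psiB_T_snoc e k hli] at h0
    have hcomm : w ⬝ᵥ z = z ⬝ᵥ w := dotProduct_comm _ _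
    linarith

lemma mem_Dimg_iff_P (C : Set (Fin (q + 1) → ℝ)) (k : Fin (q + 1) → ℝ)
    (e : Fin q → Fin (q + 1) → ℝ) (Γ : (Fin m → ℝ) → Fin (q + 1) → ℝ)
    (X : Set (Fin m → ℝ))
    (hli : LinearIndependent ℝ (Fin.snoc e k : Fin (q + 1) → Fin (q + 1) → ℝ))
    (v : (Fin q → ℝ) × ℝ) :
    v ∈ Dimg q m C k e Γ X ↔
      ∀ y ∈ Pimg q m Γ X C, 0 ≤ psiB q (Tmat q e k)⁻¹ y v := by
  obtain ⟨w, s⟩ := v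
  rw [mem_Dimg_iff C k e Γ X hli w s]
  constructor
  · intro h y hy
    have hcl : IsClosed {y : Fin (q + 1) → ℝ | 0 ≤ psiB q (Tmat q e k)⁻¹ y (w, s)} :=
      isClosed_le continuous_const (psiB_continuous _ _)
    have : Pimg q m Γ X C ⊆ {y | 0 ≤ psiB q (Tmat q e k)⁻¹ y (w, s)} :=
      closure_minimal h hcl
    exact this hy
  · intro h y hy
    exact h y (subset_closure hy)

end Aux3
section Aux4

variable {q m : ℕ}

lemma C_add_mem {C : Set (Fin (q + 1) → ℝ)} (hcv : Convex ℝ C)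
    (hcone : ∀ c ∈ C, ∀ t : ℝ, 0 ≤ t → t • c ∈ C)
    {c₁ c₂ : Fin (q + 1) → ℝ} (h₁ : c₁ ∈ C) (h₂ : c₂ ∈ C) : c₁ + c₂ ∈ C := by
  have hmid : (1/2 : ℝ) • c₁ + (1/2 : ℝ) • c₂ ∈ C :=
    hcv h₁ h₂ (by norm_num) (by norm_num) (by norm_num)
  have := hcone _ hmid 2 (by norm_num)
  convert this using 1
  module

lemma Q_convex {C : Set (Fin (q + 1) → ℝ)} (hcv : Convex ℝ C)
    (hcone : ∀ c ∈ C, ∀ t : ℝ, 0 ≤ t → t • c ∈ C)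
    {Γ : (Fin m → ℝ) → Fin (q + 1) → ℝ} (hΓ : CConvex q m C Γ)
    {X : Set (Fin m → ℝ)} (hXcv : Convex ℝ X) :
    Convex ℝ (Γ '' X + C) := by
  rintro p hp p' hp' a b ha hb hab
  rw [Set.mem_add] at hp hp' ⊢
  obtain ⟨g₁, ⟨x₁, hx₁, rfl⟩, c₁, hc₁, rfl⟩ := hp
  obtain ⟨g₂, ⟨x₂, hx₂, rfl⟩, c₂, hc₂, rfl⟩ := hp'
  have hb1 : b ≤ 1 := by linarith
  have hd := hΓ x₁ x₂ b ⟨hb, hb1⟩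
  have ha' : a = 1 - b := by linarith
  refine ⟨Γ ((1 - b) • x₁ + b • x₂), ⟨(1 - b) • x₁ + b • x₂, ?_, rfl⟩,
    ((1 - b) • Γ x₁ + b • Γ x₂ - Γ ((1 - b) • x₁ + b • x₂)) + (a • c₁ + b • c₂), ?_, ?_⟩
  · exact hXcv hx₁ hx₂ (by linarith) hb (by linarith)
  · exact C_add_mem hcv hcone hd
      (C_add_mem hcv hcone (hcone _ hc₁ a ha) (hcone _ hc₂ b hb))
  · rw [ha']
    module

lemma P_add_C {C : Set (Fin (q + 1) → ℝ)}
    {Γ : (Fin m → ℝ) → Fin (q + 1) → ℝ} {X : Set (Fin m → ℝ)}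
    (hcv : Convex ℝ C) (hcone : ∀ c ∈ C, ∀ t : ℝ, 0 ≤ t → t • c ∈ C)
    {y c : Fin (q + 1) → ℝ} (hy : y ∈ Pimg q m Γ X C) (hc : c ∈ C) :
    y + c ∈ Pimg q m Γ X C := by
  unfold Pimg at hy ⊢
  have hmaps : Set.MapsTo (fun z => z + c) (Γ '' X + C) (Γ '' X + C) := by
    rintro z hz
    rw [Set.mem_add] at hz ⊢
    obtain ⟨g, hg, c₁, hc₁, rfl⟩ := hz
    exact ⟨g, hg, c₁ + c, C_add_mem hcv hcone hc₁ hc, by abel⟩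
  have := map_mem_closure (f := fun z => z + c) (continuous_id.add continuous_const) hy hmaps
  simpa using this

lemma dot_repr (f : (Fin (q + 1) → ℝ) →L[ℝ] ℝ) (v : Fin (q + 1) → ℝ) :
    (fun i => f (Pi.single (M := fun _ => ℝ) i 1)) ⬝ᵥ v = f v := by
  conv_rhs => rw [← Finset.univ_sum_single v]
  rw [map_sum]
  unfold dotProduct
  congr 1
  funext i
  have : Pi.single i (v i) = v i • Pi.single (M := fun _ => ℝ) i (1 : ℝ) := by
    rw [← Pi.single_smul, smul_eq_mul, mul_one]
  rw [this, _root_.map_smul, smul_eq_mul, mul_comm]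

lemma sep_point {A : Set (Fin (q + 1) → ℝ)} (hAcv : Convex ℝ A) (hAcl : IsClosed A)
    {y : Fin (q + 1) → ℝ} (hy : y ∉ A) :
    ∃ (c : Fin (q + 1) → ℝ) (β : ℝ), (∀ a ∈ A, β ≤ c ⬝ᵥ a) ∧ c ⬝ᵥ y < β := by
  obtain ⟨f, u, hfy, hfb⟩ := geometric_hahn_banach_point_closed hAcv hAcl hy
  refine ⟨fun i => f (Pi.single (M := fun _ => ℝ) i 1), u, fun a ha => ?_, ?_⟩
  · rw [dot_repr]; exact (hfb a ha).le
  · rw [dot_repr]; exact hfy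

def wOf (q : ℕ) (e : Fin q → Fin (q + 1) → ℝ) (k : Fin (q + 1) → ℝ)
    (c : Fin (q + 1) → ℝ) : Fin q → ℝ :=
  fun j => ((Tmat q e k)ᵀ *ᵥ c) j.castSucc

lemma snoc_wOf (e : Fin q → Fin (q + 1) → ℝ) (k : Fin (q + 1) → ℝ)
    (c : Fin (q + 1) → ℝ) (hck : c ⬝ᵥ k = 1) :
    (Fin.snoc (wOf q e k c) 1 : Fin (q + 1) → ℝ) = (Tmat q e k)ᵀ *ᵥ c := by
  funext i
  refine Fin.lastCases ?_ ?_ i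
  · rw [Fin.snoc_last]
    have h1 : ((Tmat q e k)ᵀ *ᵥ c) (Fin.last q) = k ⬝ᵥ c := by
      unfold Matrix.mulVec dotProduct
      apply Finset.sum_congr rfl
      intro i _
      congr 1
      show Tmat q e k i (Fin.last q) = k i
      simp [Tmat]
    rw [h1, dotProduct_comm, hck]
  · intro j
    rw [Fin.snoc_castSucc]
    rfl

end Aux4
section Aux5

variable {q m : ℕ}

lemma psiB_wOf (e : Fin q → Fin (q + 1) → ℝ) (k : Fin (q + 1) → ℝ)
    (hli : LinearIndependent ℝ (Fin.snoc e k : Fin (q + 1) → Fin (q + 1) → ℝ))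
    (c : Fin (q + 1) → ℝ) (hck : c ⬝ᵥ k = 1) (y : Fin (q + 1) → ℝ) (s : ℝ) :
    psiB q (Tmat q e k)⁻¹ y (wOf q e k c, s) = c ⬝ᵥ y - s := by
  unfold psiB
  rw [show ((wOf q e k c, s) : (Fin q → ℝ) × ℝ).1 = wOf q e k c from rfl]
  rw [snoc_wOf e k c hck, Matrix.mulVec_transpose, ← dotProduct_mulVec,
    Tmul_mulVec_Tinv e k hli]

lemma Tinv_k (e : Fin q → Fin (q + 1) → ℝ) (k : Fin (q + 1) → ℝ)
    (hli : LinearIndependent ℝ (Fin.snoc e k : Fin (q + 1) → Fin (q + 1) → ℝ)) :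
    (Tmat q e k)⁻¹ *ᵥ k = (Fin.snoc 0 1 : Fin (q + 1) → ℝ) := by
  have h1 : Tmat q e k *ᵥ (Fin.snoc 0 1 : Fin (q + 1) → ℝ) = k := by
    rw [Tmat_mulVec_snoc]
    have : Emap q e 0 = 0 := by simp [Emap]
    rw [this, one_smul, zero_add]
  have h2 := Tinv_mulVec_Tmul e k hli (Fin.snoc 0 1)
  rw [h1] at h2
  exact h2

lemma dot_Tinv_k (e : Fin q → Fin (q + 1) → ℝ) (k : Fin (q + 1) → ℝ)
    (hli : LinearIndependent ℝ (Fin.snoc e k : Fin (q + 1) → Fin (q + 1) → ℝ))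
    (w : Fin q → ℝ) :
    (Fin.snoc w 1 : Fin (q + 1) → ℝ) ⬝ᵥ ((Tmat q e k)⁻¹ *ᵥ k) = 1 := by
  rw [Tinv_k e k hli, dotProduct_snoc]
  simp

lemma cpos (C : Set (Fin (q + 1) → ℝ)) (k : Fin (q + 1) → ℝ)
    (e : Fin q → Fin (q + 1) → ℝ) (Γ : (Fin m → ℝ) → Fin (q + 1) → ℝ)
    (X : Set (Fin m → ℝ))
    (hcv : Convex ℝ C) (hcone : ∀ c ∈ C, ∀ t : ℝ, 0 ≤ t → t • c ∈ C)
    (hli : LinearIndependent ℝ (Fin.snoc e k : Fin (q + 1) → Fin (q + 1) → ℝ))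
    (hPne : (Pimg q m Γ X C).Nonempty)
    {v : (Fin q → ℝ) × ℝ} (hv : v ∈ Dimg q m C k e Γ X)
    {c : Fin (q + 1) → ℝ} (hc : c ∈ C) :
    0 ≤ (Fin.snoc v.1 1 : Fin (q + 1) → ℝ) ⬝ᵥ ((Tmat q e k)⁻¹ *ᵥ c) := by
  rw [mem_Dimg_iff_P C k e Γ X hli] at hv
  obtain ⟨y₁, hy₁⟩ := hPne
  by_contra hneg
  push_neg at hneg
  set Xc := (Fin.snoc v.1 1 : Fin (q + 1) → ℝ) ⬝ᵥ ((Tmat q e k)⁻¹ *ᵥ c) with hXc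
  set t := (psiB q (Tmat q e k)⁻¹ y₁ v + 1) / (-Xc) with ht
  have hψ := hv y₁ hy₁
  have ht0 : 0 ≤ t := by
    apply div_nonneg; linarith; linarith
  have hyt : y₁ + t • c ∈ Pimg q m Γ X C :=
    P_add_C hcv hcone hy₁ (hcone _ hc t ht0)
  have h2 := hv _ hyt
  rw [psiB_add_smul] at h2
  rw [← hXc] at h2
  have hXcne : (-Xc) ≠ 0 := by linarith
  have h3 : t * (-Xc) = psiB q (Tmat q e k)⁻¹ y₁ v + 1 := by
    rw [ht]; exact div_mul_cancel₀ _ hXcne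
  have h4 : t * Xc = -(t * (-Xc)) := by ring
  rw [h4, h3] at h2
  linarith

lemma cpos_ri (C : Set (Fin (q + 1) → ℝ)) (k : Fin (q + 1) → ℝ)
    (e : Fin q → Fin (q + 1) → ℝ) (Γ : (Fin m → ℝ) → Fin (q + 1) → ℝ)
    (X : Set (Fin m → ℝ))
    (hcv : Convex ℝ C) (hcone : ∀ c ∈ C, ∀ t : ℝ, 0 ≤ t → t • c ∈ C)
    (hli : LinearIndependent ℝ (Fin.snoc e k : Fin (q + 1) → Fin (q + 1) → ℝ))
    (hPne : (Pimg q m Γ X C).Nonempty) (hk : k ∈ intrinsicInterior ℝ C)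
    {v : (Fin q → ℝ) × ℝ} (hv : v ∈ Dimg q m C k e Γ X)
    {c : Fin (q + 1) → ℝ} (hc : c ∈ intrinsicInterior ℝ C) :
    0 < (Fin.snoc v.1 1 : Fin (q + 1) → ℝ) ⬝ᵥ ((Tmat q e k)⁻¹ *ᵥ c) := by
  have hkC : k ∈ C := intrinsicInterior_subset hk
  obtain ⟨t, ht, hmem⟩ := lin_access C hkC hc
  have h0 := cpos C k e Γ X hcv hcone hli hPne hv hmem
  rw [Matrix.mulVec_add, Matrix.mulVec_smul, Matrix.mulVec_smul, dotProduct_add,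
    dotProduct_smul, dotProduct_smul, dot_Tinv_k e k hli] at h0
  simp only [smul_eq_mul, mul_one] at h0
  nlinarith

end Aux5
section Aux6

variable {q m : ℕ}

lemma nonneg_of_lb (A B β : ℝ) (h : ∀ t : ℝ, 0 ≤ t → β ≤ A + t * B) : 0 ≤ B := by
  by_contra hneg
  push_neg at hneg
  have hβA : β ≤ A := by have := h 0 le_rfl; linarith
  have hBne : (-B) ≠ 0 := by linarith
  have ht0 : 0 ≤ (A - β + 1) / (-B) := by
    apply div_nonneg <;> linarith
  have h2 := h _ ht0
  have h3 : (A - β + 1) / (-B) * (-B) = A - β + 1 := div_mul_cancel₀ _ hBne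
  nlinarith

lemma psiB_shift (M : Matrix (Fin (q + 1)) (Fin (q + 1)) ℝ) (y : Fin (q + 1) → ℝ)
    (w : Fin q → ℝ) (t t' : ℝ) :
    psiB q M y (w, t) = psiB q M y (w, t') + (t' - t) := by
  unfold psiB; ring

lemma D_convex (C : Set (Fin (q + 1) → ℝ)) (k : Fin (q + 1) → ℝ)
    (e : Fin q → Fin (q + 1) → ℝ) (Γ : (Fin m → ℝ) → Fin (q + 1) → ℝ)
    (X : Set (Fin m → ℝ))
    (hli : LinearIndependent ℝ (Fin.snoc e k : Fin (q + 1) → Fin (q + 1) → ℝ)) :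
    Convex ℝ (Dimg q m C k e Γ X) := by
  intro v₁ h₁ v₂ h₂ a b ha hb hab
  rw [mem_Dimg_iff_P C k e Γ X hli] at h₁ h₂ ⊢
  intro y hy
  rw [psiB_lin_v _ _ _ _ hab]
  have := h₁ y hy
  have := h₂ y hy
  nlinarith

lemma mem_PsiHat (M : Matrix (Fin (q + 1)) (Fin (q + 1)) ℝ)
    (P : Set (Fin (q + 1) → ℝ)) (Fs : Set ((Fin q → ℝ) × ℝ)) (y : Fin (q + 1) → ℝ) :
    y ∈ PsiHat q M P Fs ↔ ∀ v ∈ Fs, psiB q M y v = 0 ∧ y ∈ P := by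
  unfold PsiHat
  simp only [Set.mem_iInter₂, Set.mem_inter_iff, Set.mem_setOf_eq]

lemma mem_PsiHatInv (M : Matrix (Fin (q + 1)) (Fin (q + 1)) ℝ)
    (D : Set ((Fin q → ℝ) × ℝ)) (F : Set (Fin (q + 1) → ℝ)) (v : (Fin q → ℝ) × ℝ) :
    v ∈ PsiHatInv q M D F ↔ ∀ y ∈ F, psiB q M y v = 0 ∧ v ∈ D := by
  unfold PsiHatInv
  simp only [Set.mem_iInter₂, Set.mem_inter_iff, Set.mem_setOf_eq]

end Aux6
section Dir1

lemma dir1 (q m : ℕ) (C : Set (Fin (q + 1) → ℝ))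
    (hcv : Convex ℝ C)
    (hcone : ∀ c ∈ C, ∀ t : ℝ, 0 ≤ t → t • c ∈ C)
    (Γ : (Fin m → ℝ) → Fin (q + 1) → ℝ) (hΓ : CConvex q m C Γ)
    (X : Set (Fin m → ℝ)) (hXcv : Convex ℝ X)
    (k : Fin (q + 1) → ℝ) (hk : k ∈ intrinsicInterior ℝ C)
    (e : Fin q → Fin (q + 1) → ℝ)
    (hli : LinearIndependent ℝ (Fin.snoc e k : Fin (q + 1) → Fin (q + 1) → ℝ))
    (hP : (Pimg q m Γ X C).Nonempty ∧ Pimg q m Γ X C ≠ Set.univ)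
    (Fs : Set ((Fin q → ℝ) × ℝ))
    (hFs : IsKMaxExpFace q (Dimg q m C k e Γ X) Fs) :
    IsRelCMinExpFace q C (Pimg q m Γ X C)
        (PsiHat q (Tmat q e k)⁻¹ (Pimg q m Γ X C) Fs) ∧
      PsiHatInv q (Tmat q e k)⁻¹ (Dimg q m C k e Γ X)
          (PsiHat q (Tmat q e k)⁻¹ (Pimg q m Γ X C) Fs) = Fs := by
  classical
  obtain ⟨⟨u, s, α, ⟨hus0, hHne, hle⟩, hFeq⟩, hKmax⟩ := hFs
  have hPcv : Convex ℝ (Pimg q m Γ X C) := (Q_convex hcv hcone hΓ hXcv).closure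
  have hPcl : IsClosed (Pimg q m Γ X C) := isClosed_closure
  have hDc : ∀ v, v ∈ Dimg q m C k e Γ X ↔
      ∀ y ∈ Pimg q m Γ X C, 0 ≤ psiB q (Tmat q e k)⁻¹ y v :=
    fun v => mem_Dimg_iff_P C k e Γ X hli v
  have hFne : Fs.Nonempty := by rw [hFeq]; exact hHne
  have hFsubD : Fs ⊆ Dimg q m C k e Γ X := by rw [hFeq]; exact Set.inter_subset_right
  obtain ⟨v₁, hv₁⟩ := hFne
  have hv₁D : v₁ ∈ Dimg q m C k e Γ X := hFsubD hv₁
  have hv₁H : v₁.1 ⬝ᵥ u + v₁.2 * s = α := by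
    rw [hFeq] at hv₁; exact hv₁.1
  -- lowering the second coordinate stays in D
  have hlower : ∀ v ∈ Dimg q m C k e Γ X, ∀ δ : ℝ, 0 ≤ δ →
      ((v : (Fin q → ℝ) × ℝ).1, v.2 - δ) ∈ Dimg q m C k e Γ X := by
    intro v hv δ hδ
    rw [hDc] at hv ⊢
    intro y hy
    rw [psiB_shift _ _ _ _ v.2]
    have := hv y hy
    have hψ : psiB q (Tmat q e k)⁻¹ y (v.1, v.2) = psiB q (Tmat q e k)⁻¹ y v := rfl
    rw [hψ]
    linarith
  -- s is positive
  have hs0 : 0 ≤ s := by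
    have h1 := hle _ (hlower v₁ hv₁D 1 zero_le_one)
    simp only at h1
    nlinarith [h1, hv₁H]
  have hs : 0 < s := by
    rcases lt_or_eq_of_le hs0 with h | h
    · exact h
    · exfalso
      have hv₁' : (v₁.1, v₁.2 - 1) ∈ Fs := by
        rw [hFeq]
        refine ⟨?_, hlower v₁ hv₁D 1 zero_le_one⟩
        show v₁.1 ⬝ᵥ u + (v₁.2 - 1) * s = α
        rw [← h] at hv₁H ⊢
        linarith [hv₁H]
      have hKm := hKmax _ hv₁'
      unfold KMaxPt at hKm
      have hg : ((0 : Fin q → ℝ), (1 : ℝ)) ∈ KconeQ q \ (-KconeQ q) := by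
        constructor
        · exact ⟨rfl, zero_le_one⟩
        · intro hmem
          rw [Set.mem_neg] at hmem
          have := hmem.2
          simp at this
          linarith
      have hmem : v₁ ∈ ({(v₁.1, v₁.2 - 1)} + (KconeQ q \ (-KconeQ q))) ∩
          Dimg q m C k e Γ X := by
        constructor
        · rw [Set.singleton_add]
          refine ⟨((0 : Fin q → ℝ), (1 : ℝ)), hg, ?_⟩
          ext <;> simp
        · exact hv₁D
      rw [hKm] at hmem
      exact hmem
  -- normalized hyperplane
  set u' : Fin q → ℝ := s⁻¹ • u with hu'
  set α' : ℝ := α / s with hα'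
  have hHiff : ∀ p : (Fin q → ℝ) × ℝ, (p.1 ⬝ᵥ u + p.2 * s = α) ↔ (p.1 ⬝ᵥ u' + p.2 = α') := by
    intro p
    rw [hu', hα', dotProduct_smul]
    rw [smul_eq_mul]
    constructor
    · intro h; field_simp; linarith [h]
    · intro h; field_simp at h; linarith [h]
  have hDle : ∀ v ∈ Dimg q m C k e Γ X, (v : (Fin q → ℝ) × ℝ).1 ⬝ᵥ u' + v.2 ≤ α' := by
    intro v hv
    have h1 := hle v hv
    rw [hu', hα', dotProduct_smul, smul_eq_mul]
    rw [le_div_iff₀ hs]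
    have h2 : s⁻¹ * (v.1 ⬝ᵥ u) * s = v.1 ⬝ᵥ u := by field_simp
    calc (s⁻¹ * (v.1 ⬝ᵥ u) + v.2) * s = s⁻¹ * (v.1 ⬝ᵥ u) * s + v.2 * s := by ring
    _ = v.1 ⬝ᵥ u + v.2 * s := by rw [h2]
    _ ≤ α := h1
  have hFsChar : ∀ v : (Fin q → ℝ) × ℝ,
      v ∈ Fs ↔ (v.1 ⬝ᵥ u' + v.2 = α' ∧ v ∈ Dimg q m C k e Γ X) := by
    intro v
    rw [hFeq]
    constructor
    · rintro ⟨h1, h2⟩; exact ⟨(hHiff v).1 h1, h2⟩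
    · rintro ⟨h1, h2⟩; exact ⟨(hHiff v).2 h1, h2⟩
  -- the distinguished point y*
  set ystar : Fin (q + 1) → ℝ :=
    Tmat q e k *ᵥ (Fin.snoc (-u') α' : Fin (q + 1) → ℝ) with hystar
  have hψystar : ∀ v : (Fin q → ℝ) × ℝ,
      psiB q (Tmat q e k)⁻¹ ystar v = α' - (v.1 ⬝ᵥ u' + v.2) := by
    intro v
    have h1 : psiB q (Tmat q e k)⁻¹ ystar (v.1, v.2) = v.1 ⬝ᵥ (-u') + α' - v.2 :=
      psiB_T_snoc e k hli (-u') α' v.1 v.2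
    have h2 : psiB q (Tmat q e k)⁻¹ ystar v = psiB q (Tmat q e k)⁻¹ ystar (v.1, v.2) := rfl
    rw [h2, h1, dotProduct_neg]
    ring
  -- auxiliary functional attached to v₁
  set d : Fin (q + 1) → ℝ := Matrix.vecMul (Fin.snoc v₁.1 1) (Tmat q e k)⁻¹ with hd
  have hψv₁ : ∀ y, psiB q (Tmat q e k)⁻¹ y v₁ = d ⬝ᵥ y - v₁.2 := by
    intro y
    have h1 : psiB q (Tmat q e k)⁻¹ y v₁ = psiB q (Tmat q e k)⁻¹ y (v₁.1, v₁.2) := rfl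
    rw [h1, psiB_eq_dot]
  have hdk : d ⬝ᵥ k = 1 := by
    have h1 := hψv₁ k
    have h2 : psiB q (Tmat q e k)⁻¹ k v₁ =
        (Fin.snoc v₁.1 1 : Fin (q + 1) → ℝ) ⬝ᵥ ((Tmat q e k)⁻¹ *ᵥ k) - v₁.2 := rfl
    rw [h2, dot_Tinv_k e k hli] at h1
    linarith
  have hystarP : ystar ∈ Pimg q m Γ X C := by
    by_contra hy
    obtain ⟨c, β, hβ, hcy⟩ := sep_point hPcv hPcl hy
    obtain ⟨y₁, hy₁⟩ := hP.1
    set A : ℝ := psiB q (Tmat q e k)⁻¹ ystar v₁ with hA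
    have hA0 : 0 ≤ A := by
      rw [hA, hψystar]
      have := hDle v₁ hv₁D
      linarith
    set δ : ℝ := β - c ⬝ᵥ ystar with hδ
    have hδ0 : 0 < δ := by rw [hδ]; linarith
    set ε : ℝ := δ / (2 * (A + 1)) with hε
    have hε0 : 0 < ε := by
      rw [hε]; apply div_pos hδ0; linarith
    have hεA : ε * (2 * (A + 1)) = δ := by
      rw [hε]; apply div_mul_cancel₀; intro h; nlinarith
    have hdψ : ∀ y ∈ Pimg q m Γ X C, v₁.2 ≤ d ⬝ᵥ y := by
      intro y hy'
      have := (hDc v₁).1 hv₁D y hy'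
      rw [hψv₁ y] at this
      linarith
    have hGlb : ∀ y ∈ Pimg q m Γ X C, β + ε * v₁.2 ≤ (c + ε • d) ⬝ᵥ y := by
      intro y hy'
      rw [add_dotProduct, smul_dotProduct, smul_eq_mul]
      have h1 := hβ y hy'
      have h2 := hdψ y hy'
      nlinarith
    have hck : 0 ≤ c ⬝ᵥ k := by
      apply nonneg_of_lb (c ⬝ᵥ y₁) _ β
      intro t ht
      have hmem := P_add_C hcv hcone hy₁ (hcone k (intrinsicInterior_subset hk) t ht)
      have := hβ _ hmem
      rw [dotProduct_add, dotProduct_smul, smul_eq_mul] at this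
      exact this
    set γ : ℝ := c ⬝ᵥ k + ε with hγ
    have hγ0 : 0 < γ := by rw [hγ]; linarith
    set c₀ : Fin (q + 1) → ℝ := γ⁻¹ • (c + ε • d) with hc₀
    have hc₀k : c₀ ⬝ᵥ k = 1 := by
      rw [hc₀, smul_dotProduct, add_dotProduct, smul_dotProduct, hdk]
      simp only [smul_eq_mul, mul_one]
      rw [← hγ]
      exact inv_mul_cancel₀ hγ0.ne'
    set s₂ : ℝ := (β + ε * v₁.2) / γ with hs₂
    have hc₀dot : ∀ y, c₀ ⬝ᵥ y = γ⁻¹ * ((c + ε • d) ⬝ᵥ y) := by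
      intro y; rw [hc₀, smul_dotProduct, smul_eq_mul]
    have hv₂D : (wOf q e k c₀, s₂) ∈ Dimg q m C k e Γ X := by
      rw [hDc]
      intro y hy'
      rw [psiB_wOf e k hli c₀ hc₀k y s₂, hc₀dot, hs₂]
      have h1 := hGlb y hy'
      have h2 : γ⁻¹ * ((c + ε • d) ⬝ᵥ y) - (β + ε * v₁.2) / γ
          = ((c + ε • d) ⬝ᵥ y - (β + ε * v₁.2)) / γ := by
        field_simp
      rw [h2]
      apply div_nonneg (by linarith) hγ0.le
    have h3 := hDle _ hv₂D
    have h4 : 0 ≤ psiB q (Tmat q e k)⁻¹ ystar (wOf q e k c₀, s₂) := by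
      rw [hψystar]
      linarith [h3]
    rw [psiB_wOf e k hli c₀ hc₀k ystar s₂, hc₀dot, hs₂] at h4
    have h5 : β + ε * v₁.2 ≤ (c + ε • d) ⬝ᵥ ystar := by
      have h6 : γ⁻¹ * ((c + ε • d) ⬝ᵥ ystar) - (β + ε * v₁.2) / γ
          = ((c + ε • d) ⬝ᵥ ystar - (β + ε * v₁.2)) / γ := by field_simp
      rw [h6] at h4
      have := (div_nonneg_iff.mp h4)
      rcases this with ⟨h7, _⟩ | ⟨_, h8⟩
      · linarith
      · linarith
    have hdystar : d ⬝ᵥ ystar = A + v₁.2 := by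
      have := hψv₁ ystar
      rw [← hA] at this
      linarith
    rw [add_dotProduct, smul_dotProduct, smul_eq_mul, hdystar] at h5
    nlinarith
  -- Fs is convex; choose a relative interior point
  have hFscv : Convex ℝ Fs := by
    rw [hFeq]
    apply Convex.inter ?_ (D_convex C k e Γ X hli)
    intro p hp p' hp' a b ha hb hab
    simp only [Set.mem_setOf_eq] at hp hp' ⊢
    have h1 : (a • p + b • p').1 = a • p.1 + b • p'.1 := rfl
    have h2 : (a • p + b • p').2 = a * p.2 + b * p'.2 := rfl
    rw [h1, h2, add_dotProduct, smul_dotProduct, smul_dotProduct]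
    simp only [smul_eq_mul]
    linear_combination a * hp + b * hp' + α * hab
  obtain ⟨v₀, hv₀ri⟩ := Set.Nonempty.intrinsicInterior hFscv ⟨v₁, hv₁⟩
  have hv₀Fs : v₀ ∈ Fs := intrinsicInterior_subset hv₀ri
  have hv₀D : v₀ ∈ Dimg q m C k e Γ X := hFsubD hv₀Fs
  have hψystar0 : ∀ v ∈ Fs, psiB q (Tmat q e k)⁻¹ ystar v = 0 := by
    intro v hv
    rw [hψystar, ((hFsChar v).1 hv).1]; ring
  have hzero : ∀ y ∈ Pimg q m Γ X C, psiB q (Tmat q e k)⁻¹ y v₀ = 0 →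
      ∀ v ∈ Fs, psiB q (Tmat q e k)⁻¹ y v = 0 := by
    intro y hyP hy0 v hv
    obtain ⟨t, ht, hmem⟩ := lin_access Fs hv hv₀ri
    have h1 : 0 ≤ psiB q (Tmat q e k)⁻¹ y ((1 + t) • v₀ + (-t) • v) :=
      (hDc _).1 (hFsubD hmem) y hyP
    rw [psiB_lin_v _ _ _ _ (by ring : (1 + t) + (-t) = 1), hy0] at h1
    have h2 : 0 ≤ psiB q (Tmat q e k)⁻¹ y v := (hDc _).1 (hFsubD hv) y hyP
    nlinarith
  have hPsiHatEq : PsiHat q (Tmat q e k)⁻¹ (Pimg q m Γ X C) Fs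
      = {y | psiB q (Tmat q e k)⁻¹ y v₀ = 0} ∩ Pimg q m Γ X C := by
    ext y
    rw [mem_PsiHat]
    constructor
    · intro h
      exact (h v₀ hv₀Fs)
    · rintro ⟨h1, h2⟩ v hv
      exact ⟨hzero y h2 h1 v hv, h2⟩
  have hystarPsiHat : ystar ∈ PsiHat q (Tmat q e k)⁻¹ (Pimg q m Γ X C) Fs := by
    rw [mem_PsiHat]
    intro v hv
    exact ⟨hψystar0 v hv, hystarP⟩
  set d₀ : Fin (q + 1) → ℝ := Matrix.vecMul (Fin.snoc v₀.1 1) (Tmat q e k)⁻¹ with hd₀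
  have hψv₀ : ∀ y, psiB q (Tmat q e k)⁻¹ y v₀ = d₀ ⬝ᵥ y - v₀.2 := by
    intro y
    have h1 : psiB q (Tmat q e k)⁻¹ y v₀ = psiB q (Tmat q e k)⁻¹ y (v₀.1, v₀.2) := rfl
    rw [h1, psiB_eq_dot]
  constructor
  · constructor
    · refine ⟨-d₀, -v₀.2, ⟨?_, ?_, ?_⟩, ?_⟩
      · intro h0
        have hd₀0 : d₀ = 0 := by
          have h1 := congrArg Neg.neg h0
          simpa using h1
        have h1 := hψv₀ (Tmat q e k *ᵥ (Fin.snoc 0 1 : Fin (q + 1) → ℝ))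
        rw [hd₀0, zero_dotProduct] at h1
        have h2 : psiB q (Tmat q e k)⁻¹
            (Tmat q e k *ᵥ (Fin.snoc 0 1 : Fin (q + 1) → ℝ)) (v₀.1, v₀.2)
            = v₀.1 ⬝ᵥ 0 + 1 - v₀.2 := psiB_T_snoc e k hli 0 1 v₀.1 v₀.2
        have h4 : (0:ℝ) - v₀.2 = v₀.1 ⬝ᵥ 0 + 1 - v₀.2 := by rw [← h1]; exact h2
        rw [dotProduct_zero] at h4
        linarith
      · refine ⟨ystar, ?_, hystarP⟩
        show -d₀ ⬝ᵥ ystar = -v₀.2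
        have h1 := hψystar0 v₀ hv₀Fs
        rw [hψv₀ ystar] at h1
        rw [neg_dotProduct]
        linarith
      · intro y hy
        have h1 := (hDc v₀).1 hv₀D y hy
        rw [hψv₀ y] at h1
        show -d₀ ⬝ᵥ y ≤ -v₀.2
        rw [neg_dotProduct]
        linarith
      · rw [hPsiHatEq]
        ext y
        simp only [Set.mem_inter_iff, Set.mem_setOf_eq]
        constructor
        · rintro ⟨h1, h2⟩
          refine ⟨?_, h2⟩
          rw [neg_dotProduct]
          rw [hψv₀ y] at h1
          linarith
        · rintro ⟨h1, h2⟩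
          refine ⟨?_, h2⟩
          rw [hψv₀ y]
          rw [neg_dotProduct] at h1
          linarith
    · intro y hy
      rw [Set.eq_empty_iff_forall_notMem]
      rintro p ⟨hpP, hpsub⟩
      rw [Set.mem_sub] at hpsub
      obtain ⟨a, ha, b, hb, hab⟩ := hpsub
      rw [Set.mem_singleton_iff] at ha
      rw [ha] at hab
      have hψy0 : psiB q (Tmat q e k)⁻¹ y v₀ = 0 := ((mem_PsiHat _ _ _ _).1 hy v₀ hv₀Fs).1
      have hpos := cpos_ri C k e Γ X hcv hcone hli hP.1 hk hv₀D hb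
      have hψp : psiB q (Tmat q e k)⁻¹ p v₀ < 0 := by
        have h1 : p = y + (-1 : ℝ) • b := by rw [← hab]; module
        rw [h1, psiB_add_smul, hψy0]
        nlinarith [hpos]
      have := (hDc v₀).1 hv₀D p hpP
      linarith
  · ext v
    rw [mem_PsiHatInv]
    constructor
    · intro h
      obtain ⟨h1, h2⟩ := h ystar hystarPsiHat
      rw [hFsChar]
      refine ⟨?_, h2⟩
      rw [hψystar v] at h1
      linarith
    · intro hv y hy
      exact ⟨((mem_PsiHat _ _ _ _).1 hy v hv).1, hFsubD hv⟩

end Dir1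
section Dir2

lemma dir2 (q m : ℕ) (C : Set (Fin (q + 1) → ℝ))
    (hcv : Convex ℝ C)
    (hcone : ∀ c ∈ C, ∀ t : ℝ, 0 ≤ t → t • c ∈ C)
    (Γ : (Fin m → ℝ) → Fin (q + 1) → ℝ) (hΓ : CConvex q m C Γ)
    (X : Set (Fin m → ℝ)) (hXcv : Convex ℝ X)
    (k : Fin (q + 1) → ℝ) (hk : k ∈ intrinsicInterior ℝ C)
    (e : Fin q → Fin (q + 1) → ℝ)
    (hli : LinearIndependent ℝ (Fin.snoc e k : Fin (q + 1) → Fin (q + 1) → ℝ))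
    (hP : (Pimg q m Γ X C).Nonempty ∧ Pimg q m Γ X C ≠ Set.univ)
    (F : Set (Fin (q + 1) → ℝ))
    (hF : IsRelCMinExpFace q C (Pimg q m Γ X C) F) :
    IsKMaxExpFace q (Dimg q m C k e Γ X)
        (PsiHatInv q (Tmat q e k)⁻¹ (Dimg q m C k e Γ X) F) ∧
      PsiHat q (Tmat q e k)⁻¹ (Pimg q m Γ X C)
          (PsiHatInv q (Tmat q e k)⁻¹ (Dimg q m C k e Γ X) F) = F := by
  classical
  obtain ⟨⟨n, α₀, ⟨hn0, hHne, hle⟩, hFeq⟩, hCmin⟩ := hF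
  have hPcv : Convex ℝ (Pimg q m Γ X C) := (Q_convex hcv hcone hΓ hXcv).closure
  have hPcl : IsClosed (Pimg q m Γ X C) := isClosed_closure
  have hDc : ∀ v, v ∈ Dimg q m C k e Γ X ↔
      ∀ y ∈ Pimg q m Γ X C, 0 ≤ psiB q (Tmat q e k)⁻¹ y v :=
    fun v => mem_Dimg_iff_P C k e Γ X hli v
  have hFne : F.Nonempty := by rw [hFeq]; exact hHne
  have hFsubP : F ⊆ Pimg q m Γ X C := by rw [hFeq]; exact Set.inter_subset_right
  have hFH : ∀ y ∈ F, n ⬝ᵥ y = α₀ := by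
    intro y hy; rw [hFeq] at hy; exact hy.1
  obtain ⟨y₂, hy₂⟩ := hFne
  have hy₂P : y₂ ∈ Pimg q m Γ X C := hFsubP hy₂
  have hkC : k ∈ C := intrinsicInterior_subset hk
  have hnC : ∀ c ∈ C, n ⬝ᵥ c ≤ 0 := by
    intro c hc
    have h1 := hle (y₂ + c) (P_add_C hcv hcone hy₂P hc)
    rw [dotProduct_add] at h1
    have h2 := hle y₂ hy₂P
    have h3 := hFH y₂ hy₂
    linarith
  set γ : ℝ := -(n ⬝ᵥ k) with hγdef
  have hγ0 : 0 ≤ γ := by have := hnC k hkC; rw [hγdef]; linarith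
  have hγ : 0 < γ := by
    rcases lt_or_eq_of_le hγ0 with h | h
    · exact h
    · exfalso
      have hnk : n ⬝ᵥ k = 0 := by rw [hγdef] at h; linarith
      have hy₂k : y₂ + k ∈ F := by
        rw [hFeq]
        refine ⟨?_, P_add_C hcv hcone hy₂P hkC⟩
        show n ⬝ᵥ (y₂ + k) = α₀
        rw [dotProduct_add, hnk, hFH y₂ hy₂, add_zero]
      have hem := hCmin (y₂ + k) hy₂k
      rw [Set.eq_empty_iff_forall_notMem] at hem
      apply hem y₂
      refine ⟨hy₂P, ?_⟩
      rw [Set.mem_sub]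
      exact ⟨y₂ + k, Set.mem_singleton _, k, hk, by abel⟩
  set c₀ : Fin (q + 1) → ℝ := γ⁻¹ • (-n) with hc₀
  have hc₀k : c₀ ⬝ᵥ k = 1 := by
    rw [hc₀, smul_dotProduct, neg_dotProduct, smul_eq_mul, ← hγdef]
    exact inv_mul_cancel₀ hγ.ne'
  set s₀ : ℝ := -α₀ / γ with hs₀
  have hrel : ∀ y, psiB q (Tmat q e k)⁻¹ y (wOf q e k c₀, s₀) = (α₀ - n ⬝ᵥ y) / γ := by
    intro y
    rw [psiB_wOf e k hli c₀ hc₀k y s₀, hc₀, smul_dotProduct, neg_dotProduct, smul_eq_mul, hs₀]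
    field_simp
    ring
  have hv₀D : (wOf q e k c₀, s₀) ∈ Dimg q m C k e Γ X := by
    rw [hDc]
    intro y hy
    rw [hrel]
    apply div_nonneg _ hγ.le
    have := hle y hy
    linarith
  have hψiff : ∀ y, psiB q (Tmat q e k)⁻¹ y (wOf q e k c₀, s₀) = 0 ↔ n ⬝ᵥ y = α₀ := by
    intro y
    rw [hrel, div_eq_zero_iff]
    constructor
    · rintro (h | h)
      · linarith
      · exfalso; exact hγ.ne' h
    · intro h; left; linarith
  have hv₀Fs : (wOf q e k c₀, s₀) ∈ PsiHatInv q (Tmat q e k)⁻¹ (Dimg q m C k e Γ X) F := by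
    rw [mem_PsiHatInv]
    intro y hy
    exact ⟨(hψiff y).2 (hFH y hy), hv₀D⟩
  have hFcv : Convex ℝ F := by
    rw [hFeq]
    apply Convex.inter ?_ hPcv
    intro y hy y' hy' a b ha hb hab
    simp only [Set.mem_setOf_eq] at hy hy' ⊢
    rw [dotProduct_add, dotProduct_smul, dotProduct_smul]
    simp only [smul_eq_mul]
    linear_combination a * hy + b * hy' + α₀ * hab
  obtain ⟨y₀, hy₀ri⟩ := Set.Nonempty.intrinsicInterior hFcv ⟨y₂, hy₂⟩
  have hy₀F : y₀ ∈ F := intrinsicInterior_subset hy₀ri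
  have hy₀P : y₀ ∈ Pimg q m Γ X C := hFsubP hy₀F
  set z₀ : Fin q → ℝ := Fin.init ((Tmat q e k)⁻¹ *ᵥ y₀) with hz₀
  set r₀ : ℝ := ((Tmat q e k)⁻¹ *ᵥ y₀) (Fin.last q) with hr₀
  have hψy₀ : ∀ v : (Fin q → ℝ) × ℝ,
      psiB q (Tmat q e k)⁻¹ y₀ v = v.1 ⬝ᵥ z₀ + r₀ - v.2 := by
    intro v
    have hdec := Tmat_decomp e k hli y₀
    have h1 : psiB q (Tmat q e k)⁻¹ y₀ (v.1, v.2)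
        = psiB q (Tmat q e k)⁻¹ (Tmat q e k *ᵥ (Fin.snoc z₀ r₀ : Fin (q + 1) → ℝ)) (v.1, v.2) := by
      rw [hdec]
    rw [show psiB q (Tmat q e k)⁻¹ y₀ v = psiB q (Tmat q e k)⁻¹ y₀ (v.1, v.2) from rfl,
      h1, psiB_T_snoc e k hli]
  have hzero2 : ∀ v ∈ Dimg q m C k e Γ X, psiB q (Tmat q e k)⁻¹ y₀ v = 0 →
      ∀ y ∈ F, psiB q (Tmat q e k)⁻¹ y v = 0 := by
    intro v hv h0 y hy
    obtain ⟨t, ht, hmem⟩ := lin_access F hy hy₀ri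
    have h1 : 0 ≤ psiB q (Tmat q e k)⁻¹ ((1 + t) • y₀ + (-t) • y) v :=
      (hDc v).1 hv _ (hFsubP hmem)
    rw [psiB_lin_y _ _ _ _ _ (by ring : (1 + t) + (-t) = 1), h0] at h1
    have h2 : 0 ≤ psiB q (Tmat q e k)⁻¹ y v := (hDc v).1 hv y (hFsubP hy)
    nlinarith
  have hInvChar : ∀ v, v ∈ PsiHatInv q (Tmat q e k)⁻¹ (Dimg q m C k e Γ X) F ↔
      (psiB q (Tmat q e k)⁻¹ y₀ v = 0 ∧ v ∈ Dimg q m C k e Γ X) := by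
    intro v
    rw [mem_PsiHatInv]
    constructor
    · intro h; exact h y₀ hy₀F
    · rintro ⟨h0, hD⟩ y hy
      exact ⟨hzero2 v hD h0 y hy, hD⟩
  constructor
  · constructor
    · refine ⟨-z₀, 1, r₀, ⟨?_, ?_, ?_⟩, ?_⟩
      · intro h
        have := congrArg Prod.snd h
        simp at this
      · refine ⟨(wOf q e k c₀, s₀), ?_, hv₀D⟩
        show (wOf q e k c₀) ⬝ᵥ (-z₀) + s₀ * 1 = r₀
        have h1 : psiB q (Tmat q e k)⁻¹ y₀ (wOf q e k c₀, s₀) = 0 :=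
          (hψiff y₀).2 (hFH y₀ hy₀F)
        rw [hψy₀] at h1
        rw [dotProduct_neg]
        have hcm := dotProduct_comm (wOf q e k c₀) z₀
        linarith [h1, hcm]
      · intro p hp
        have h1 := (hDc p).1 hp y₀ hy₀P
        rw [hψy₀] at h1
        rw [dotProduct_neg]
        have hcm := dotProduct_comm p.1 z₀
        linarith [h1, hcm]
      · ext v
        rw [hInvChar]
        simp only [Set.mem_inter_iff, Set.mem_setOf_eq]
        constructor
        · rintro ⟨h1, h2⟩
          refine ⟨?_, h2⟩
          rw [hψy₀] at h1
          rw [dotProduct_neg]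
          have hcm := dotProduct_comm v.1 z₀
          linarith [h1, hcm]
        · rintro ⟨h1, h2⟩
          refine ⟨?_, h2⟩
          rw [hψy₀]
          rw [dotProduct_neg] at h1
          have hcm := dotProduct_comm v.1 z₀
          linarith [h1, hcm]
    · intro v hv
      unfold KMaxPt
      rw [Set.eq_empty_iff_forall_notMem]
      rintro p ⟨hp1, hp2⟩
      rw [Set.singleton_add] at hp1
      obtain ⟨g, hg, hvg⟩ := hp1
      obtain ⟨⟨hg1, hg2⟩, hgn⟩ := hg
      have hg2' : 0 < g.2 := by
        by_contra hcon
        push_neg at hcon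
        apply hgn
        rw [Set.mem_neg]
        exact ⟨by show -g.1 = 0; rw [hg1]; simp, by show (0:ℝ) ≤ -g.2; linarith⟩
      have hpform : p = (v.1, v.2 + g.2) := by
        rw [← hvg]
        have : (v + g).1 = v.1 + g.1 := rfl
        ext
        · show (v + g).1 _ = v.1 _
          rw [this, hg1, add_zero]
        · rfl
      have hψ0 : psiB q (Tmat q e k)⁻¹ y₀ v = 0 := ((hInvChar v).1 hv).1
      have h1 : 0 ≤ psiB q (Tmat q e k)⁻¹ y₀ p := (hDc p).1 hp2 y₀ hy₀P
      rw [hpform, psiB_shift _ _ _ _ v.2] at h1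
      have h2 : psiB q (Tmat q e k)⁻¹ y₀ (v.1, v.2) = 0 := hψ0
      rw [h2] at h1
      linarith
  · ext y
    rw [mem_PsiHat]
    constructor
    · intro h
      obtain ⟨h1, h2⟩ := h _ hv₀Fs
      rw [hψiff y] at h1
      rw [hFeq]
      exact ⟨h1, h2⟩
    · intro hy v hv
      exact ⟨((mem_PsiHatInv _ _ _ _).1 hv y hy).1, hFsubP hy⟩

end Dir2

/-- Ψ̂ is an inclusion-reversing one-to-one map between the
K-maximal exposed faces of D and the relatively C-minimal exposed faces of P,
with inverse Ψ̂⁻¹. -/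
theorem stmt16 (q m : ℕ) (C : Set (Fin (q + 1) → ℝ))
    (hne : C.Nonempty) (hcl : IsClosed C) (hcv : Convex ℝ C)
    (hcone : ∀ c ∈ C, ∀ t : ℝ, 0 ≤ t → t • c ∈ C)
    (hnotlin : ¬∃ W : Submodule ℝ (Fin (q + 1) → ℝ), (W : Set (Fin (q + 1) → ℝ)) = C)
    (Γ : (Fin m → ℝ) → Fin (q + 1) → ℝ) (hΓ : CConvex q m C Γ)
    (X : Set (Fin m → ℝ)) (hX : X.Nonempty) (hXcv : Convex ℝ X)
    (k : Fin (q + 1) → ℝ) (hk : k ∈ intrinsicInterior ℝ C)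
    (e : Fin q → Fin (q + 1) → ℝ)
    (hli : LinearIndependent ℝ (Fin.snoc e k : Fin (q + 1) → Fin (q + 1) → ℝ))
    (hP : (Pimg q m Γ X C).Nonempty ∧ Pimg q m Γ X C ≠ Set.univ) :
    (∀ Fs : Set ((Fin q → ℝ) × ℝ),
        IsKMaxExpFace q (Dimg q m C k e Γ X) Fs →
        IsRelCMinExpFace q C (Pimg q m Γ X C)
            (PsiHat q (Tmat q e k)⁻¹ (Pimg q m Γ X C) Fs) ∧
          PsiHatInv q (Tmat q e k)⁻¹ (Dimg q m C k e Γ X)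
              (PsiHat q (Tmat q e k)⁻¹ (Pimg q m Γ X C) Fs) = Fs) ∧
    (∀ F : Set (Fin (q + 1) → ℝ),
        IsRelCMinExpFace q C (Pimg q m Γ X C) F →
        IsKMaxExpFace q (Dimg q m C k e Γ X)
            (PsiHatInv q (Tmat q e k)⁻¹ (Dimg q m C k e Γ X) F) ∧
          PsiHat q (Tmat q e k)⁻¹ (Pimg q m Γ X C)
              (PsiHatInv q (Tmat q e k)⁻¹ (Dimg q m C k e Γ X) F) = F) ∧
    (∀ Fs₁ Fs₂ : Set ((Fin q → ℝ) × ℝ),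
        IsKMaxExpFace q (Dimg q m C k e Γ X) Fs₁ →
        IsKMaxExpFace q (Dimg q m C k e Γ X) Fs₂ → Fs₁ ⊆ Fs₂ →
        PsiHat q (Tmat q e k)⁻¹ (Pimg q m Γ X C) Fs₂ ⊆
          PsiHat q (Tmat q e k)⁻¹ (Pimg q m Γ X C) Fs₁) := by
  refine ⟨fun Fs hFs => dir1 q m C hcv hcone Γ hΓ X hXcv k hk e hli hP Fs hFs,
    fun F hF => dir2 q m C hcv hcone Γ hΓ X hXcv k hk e hli hP F hF,
    fun Fs₁ Fs₂ _ _ hsub y hy => ?_⟩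
  rw [mem_PsiHat] at hy ⊢
  intro v hv
  exact hy v (hsub hv)
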